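/- For n > 2m, where m = |B| is the number of leaves of a fixed binary tree B, the number of plane binary trees with n leaves for which one of the two root branches is isomorphic to B equals 2·(2^{m−1}/|A(B)|)·C_{n−m}, where C_k = (1/k)binom(2k−2, k−1) is the Catalan number. Consequently, the proportion of plane binary trees with n leaves having a root branch isomorphic to B converges to 2^{−m}/|A(B)| as n → ∞. -/

import Mathlib

open scoped Classical

inductive PTree : Type
  | leaf : PTree
  | node : PTree → PTree → PTree
deriving DecidableEq

namespace PTree

def size : PTree → ℕ
  | leaf => 1
  | node l r => size l + size r

def cherries : PTree → ℕ
  | leaf => 0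
  | node leaf leaf => 1
  | node l r => cherries l + cherries r

def height : PTree → ℕ
  | leaf => 0
  | node l r => max (height l) (height r) + 1

def encode : PTree → ℕ
  | leaf => 0
  | node l r => Nat.pair (encode l) (encode r) + 1

def normalize : PTree → PTree
  | leaf => leaf
  | node l r =>
      let l' := normalize l
      let r' := normalize r
      if encode l' ≤ encode r' then node l' r' else node r' l'

def isoFuns : PTree → PTree → List (ℕ → ℕ)
  | leaf, leaf => [fun i => i]
  | node l r, node l' r' =>
      ((isoFuns l l').flatMap fun g => (isoFuns r r').map fun h =>
        fun i => if i < l.size then g i else h (i - l.size) + l'.size)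
      ++
      ((isoFuns l r').flatMap fun g => (isoFuns r l').map fun h =>
        fun i => if i < l.size then g i + l'.size else h (i - l.size))
  | _, _ => []

def planeTrees : ℕ → Finset PTree
  | 0 => ∅
  | 1 => {leaf}
  | n + 2 =>
      (Finset.range (n + 1)).attach.biUnion fun k =>
        ((planeTrees (k.1 + 1)) ×ˢ (planeTrees (n + 1 - k.1))).image
          fun p => node p.1 p.2
  termination_by n => n
  decreasing_by
  · have := Finset.mem_range.mp k.2; omega
  · omega

def binTrees (n : ℕ) : Finset PTree := (planeTrees n).image normalize

/-- Triples (T, v, S): left plane tree, right plane tree, and a matching `v`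
(a permutation of `0, …, n-1`, encoded as the list of its values) matching
leaf `i` of `T` with leaf `v i` of `S`. -/
def Triples (n : ℕ) : Finset (PTree × PTree × List ℕ) :=
  (planeTrees n) ×ˢ ((planeTrees n) ×ˢ (List.range n).permutations.toFinset)

/-- Two triples represent the same tanglegram iff there are isomorphisms of the left
trees and of the right trees compatible with the matchings. -/
def equivTriple (n : ℕ) (t t' : PTree × PTree × List ℕ) : Bool :=
  (isoFuns t.1 t'.1).any fun φ => (isoFuns t.2.1 t'.2.1).any fun ψ =>
    (List.range n).all fun i => t'.2.2.getD (φ i) 0 == ψ (t.2.2.getD i 0)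

/-- The tanglegrams of size `n`: equivalence classes of triples. -/
def tangleClasses (n : ℕ) : Finset (Finset (PTree × PTree × List ℕ)) :=
  (Triples n).image fun t => (Triples n).filter (fun t' => equivTriple n t t' = true)

/-- The number of tanglegrams of size `n`. -/
def numTanglegrams (n : ℕ) : ℕ := (tangleClasses n).card

/-- The probability that a uniformly random tanglegram of size `n` satisfies the
(isomorphism-invariant) property `P` of triples. -/
noncomputable def tangleProb (n : ℕ) (P : PTree × PTree × List ℕ → Prop) : ℝ :=
  ((tangleClasses n).filter fun c => ∃ t ∈ c, P t).card / numTanglegrams n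

/-- The expectation of the statistic `f` of a uniformly random tanglegram of size `n`. -/
noncomputable def tangleExp (n : ℕ) (f : PTree × PTree × List ℕ → ℕ) : ℝ :=
  ∑' k : ℕ, (k : ℝ) * tangleProb n (fun t => f t = k)

end PTree

namespace PTree

/-- The distribution on pairs of binary trees (canonical representatives) induced by
the two halves of a uniformly random tanglegram of size `n`:
probability that the pair of isomorphism classes of the two trees lies in `S`. -/
noncomputable def nuT (n : ℕ) (S : Finset (PTree × PTree)) : ℝ :=
  tangleProb n fun t => (normalize t.1, normalize t.2.1) ∈ S

/-- The distribution on pairs of binary trees induced by two independent uniformly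
random plane binary trees with `n` leaves. -/
noncomputable def nuP (n : ℕ) (S : Finset (PTree × PTree)) : ℝ :=
  (((planeTrees n) ×ˢ (planeTrees n)).filter
      fun p => (normalize p.1, normalize p.2) ∈ S).card / ((planeTrees n).card ^ 2 : ℝ)

/-- The total variation distance between `nuT` and `nuP`. -/
noncomputable def tvDist (n : ℕ) : ℝ :=
  ((binTrees n ×ˢ binTrees n).powerset).sup' (Finset.powerset_nonempty _)
    fun S => |nuT n S - nuP n S|

/-- The number of occurrences of (trees isomorphic to) `B` as a fringe subtree of `T`. -/
def occ (B : PTree) : PTree → ℕ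
  | leaf => if normalize leaf = normalize B then 1 else 0
  | node l r => (if normalize (node l r) = normalize B then 1 else 0) + occ B l + occ B r

/-- The number of generators of the automorphism group of `T`: the number of internal
vertices whose two branches are isomorphic. -/
def gens : PTree → ℕ
  | leaf => 0
  | node l r => (if normalize l = normalize r then 1 else 0) + gens l + gens r

/-- `T` has a root branch isomorphic to `B`. -/
def hasBranch (B : PTree) : PTree → Prop
  | leaf => False
  | node l r => normalize l = normalize B ∨ normalize r = normalize B

/-- The cherries of a plane binary tree whose leaves are numbered from `k` on
(left to right), as pairs of leaf positions. -/
def cherryList : PTree → ℕ → List (ℕ × ℕ)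
  | leaf, _ => []
  | node leaf leaf, k => [(k, k + 1)]
  | node l r, k => cherryList l k ++ cherryList r (k + l.size)

/-- The number of matched cherries: cherries of `T` whose two leaves are matched by `L`
to the two leaves of a cherry of `S`. -/
def matchedCherries (T S : PTree) (L : List ℕ) : ℕ :=
  (cherryList T 0).countP fun p =>
    (cherryList S 0).any fun q =>
      (L.getD p.1 0 == q.1 && L.getD p.2 0 == q.2) ||
      (L.getD p.1 0 == q.2 && L.getD p.2 0 == q.1)

/-- The number of automorphisms of the tanglegram represented by the triple `(T, L, S)`:
pairs of automorphisms of the two trees compatible with the matching `L`. -/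
def tangleAutCount (T S : PTree) (L : List ℕ) : ℕ :=
  ((isoFuns T T).map fun a =>
    (isoFuns S S).countP fun b =>
      (List.range T.size).all fun i => L.getD (a i) 0 == b (L.getD i 0)).sum

/-- The number of automorphisms of `T` whose cycle type is `μ(s) = 2^s 1^(n-2s)`,
i.e. involutions of the leaves moving exactly `2 s` leaves. -/
def autMuCount (T : PTree) (s : ℕ) : ℕ :=
  (isoFuns T T).countP fun f =>
    ((List.range T.size).all fun i => f (f i) == i) &&
    ((List.range T.size).countP fun i => !(f i == i)) == 2 * s

end PTree
namespace PTree

lemma size_pos (T : PTree) : 0 < T.size := by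
  induction T with
  | leaf => simp [size]
  | node l r ihl ihr => simp [size]; omega

lemma size_of_mem : ∀ n : ℕ, ∀ T ∈ planeTrees n, T.size = n := by
  intro n
  induction n using Nat.strong_induction_on with
  | _ n ih =>
    match n with
    | 0 => intro T hT; simp [planeTrees] at hT
    | 1 => intro T hT; simp [planeTrees] at hT; simp [hT, size]
    | (n+2) =>
      intro T hT
      rw [planeTrees] at hT
      simp only [Finset.mem_biUnion, Finset.mem_attach, Finset.mem_image,
        Finset.mem_product, true_and] at hT
      obtain ⟨⟨k, hk⟩, ⟨p, ⟨h1, h2⟩, rfl⟩⟩ := hT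
      have hk' := Finset.mem_range.mp hk
      have e1 := ih (k+1) (by omega) p.1 h1
      have e2 := ih (n+1-k) (by omega) p.2 h2
      simp [size, e1, e2]; omega

lemma mem_of_size : ∀ T : PTree, T ∈ planeTrees T.size := by
  intro T
  induction T with
  | leaf => simp [size, planeTrees]
  | node l r ihl ihr =>
    have hl := size_pos l
    have hr := size_pos r
    have : (node l r).size = (l.size + r.size - 2) + 2 := by simp [size]; omega
    rw [this, planeTrees]
    simp only [Finset.mem_biUnion, Finset.mem_attach, Finset.mem_image,
      Finset.mem_product, true_and]
    refine ⟨⟨l.size - 1, Finset.mem_range.mpr (by omega)⟩, (l, r), ⟨?_, ?_⟩, rfl⟩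
    · have : l.size - 1 + 1 = l.size := by omega
      rw [this]; exact ihl
    · have : l.size + r.size - 2 + 1 - (l.size - 1) = r.size := by omega
      rw [this]; exact ihr

lemma mem_planeTrees {n : ℕ} {T : PTree} : T ∈ planeTrees n ↔ T.size = n := by
  constructor
  · exact size_of_mem n T
  · rintro rfl; exact mem_of_size T

end PTree
namespace PTree

lemma node_left_size {k : ℕ} {l r : PTree} (h : l ∈ planeTrees k) : (node l r).size = k + r.size := by
  simp [size, mem_planeTrees.mp h]

lemma card_planeTrees : ∀ n : ℕ, (planeTrees (n+1)).card = catalan n := by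
  intro n
  induction n using Nat.strong_induction_on with
  | _ n ih =>
    match n with
    | 0 => simp [planeTrees]
    | (n+1) =>
      rw [show n + 1 + 1 = n + 2 from rfl, planeTrees]
      rw [Finset.card_biUnion]
      · have key : ∀ k : ℕ, k ∈ Finset.range (n+1) →
            (((planeTrees (k + 1)) ×ˢ (planeTrees (n + 1 - k))).image
              fun p => node p.1 p.2).card = catalan k * catalan (n - k) := by
          intro k hk
          have hk' := Finset.mem_range.mp hk
          rw [Finset.card_image_of_injOn]
          · rw [Finset.card_product, ih k (by omega)]
            have : n + 1 - k = (n - k) + 1 := by omega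
            rw [this, ih (n - k) (by omega)]
          · intro p _ q _ hpq
            simp only [PTree.node.injEq] at hpq
            exact Prod.ext hpq.1 hpq.2
        rw [Finset.sum_attach (Finset.range (n+1))
          (fun k => (((planeTrees (k + 1)) ×ˢ (planeTrees (n + 1 - k))).image
            fun p => node p.1 p.2).card)]
        rw [Finset.sum_congr rfl key, catalan_succ]
        rw [← Fin.sum_univ_eq_sum_range (fun k => catalan k * catalan (n - k)) (n+1)]
      · intro x _ y _ hxy
        simp only [Finset.disjoint_left, Finset.mem_image, Finset.mem_product]
        rintro T ⟨p, ⟨hp1, _⟩, rfl⟩ ⟨q, ⟨hq1, _⟩, hq⟩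
        simp only [PTree.node.injEq] at hq
        apply hxy
        have e1 := mem_planeTrees.mp hp1
        have e2 := mem_planeTrees.mp hq1
        rw [hq.1] at e2
        exact Subtype.ext (by omega)

lemma catalan_ne_zero (n : ℕ) : catalan n ≠ 0 := by
  intro h
  have h1 := succ_mul_catalan_eq_centralBinom n
  have h2 := Nat.centralBinom_pos n
  rw [h, Nat.mul_zero] at h1
  omega

end PTree
namespace PTree

lemma encode_injective : Function.Injective encode := by
  intro S
  induction S with
  | leaf => intro T h; cases T with
    | leaf => rfl
    | node l r => simp [encode] at h
  | node l r ihl ihr =>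
    intro T h
    cases T with
    | leaf => simp [encode] at h
    | node l' r' =>
      simp only [encode, Nat.add_right_cancel_iff] at h
      have := Nat.pair_eq_pair.mp h
      rw [ihl this.1, ihr this.2]

lemma size_normalize (T : PTree) : (normalize T).size = T.size := by
  induction T with
  | leaf => rfl
  | node l r ihl ihr =>
    simp only [normalize]
    split <;> simp [size, ihl, ihr] <;> omega

lemma size_eq_of_normalize_eq {S T : PTree} (h : normalize S = normalize T) :
    S.size = T.size := by
  rw [← size_normalize S, ← size_normalize T, h]

lemma normalize_node_eq_iff {l r l' r' : PTree} :
    normalize (node l r) = normalize (node l' r') ↔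
      (normalize l = normalize l' ∧ normalize r = normalize r') ∨
      (normalize l = normalize r' ∧ normalize r = normalize l') := by
  constructor
  · intro h
    simp only [normalize] at h
    split at h <;> split at h <;>
      (simp only [PTree.node.injEq] at h; tauto)
  · intro h
    rcases h with ⟨h1, h2⟩ | ⟨h1, h2⟩
    · simp only [normalize, h1, h2]
    · simp only [normalize, h1, h2]
      rcases le_or_gt (encode (normalize r')) (encode (normalize l')) with hle | hlt
      · rcases le_or_gt (encode (normalize l')) (encode (normalize r')) with hle' | hlt'
        · have : normalize l' = normalize r' := encode_injective (le_antisymm hle' hle)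
          simp [this, if_pos, le_refl]
        · rw [if_pos hle, if_neg (not_le.mpr hlt')]
      · rw [if_neg (not_le.mpr hlt), if_pos (le_of_lt hlt)]

lemma normalize_leaf_ne_node (l r : PTree) : normalize leaf ≠ normalize (node l r) := by
  simp only [normalize]
  split <;> simp

end PTree
namespace PTree

lemma isoFuns_node_length (l r l' r' : PTree) :
    (isoFuns (node l r) (node l' r')).length =
      (isoFuns l l').length * (isoFuns r r').length +
      (isoFuns l r').length * (isoFuns r l').length := by
  simp [isoFuns, List.length_flatMap, Function.comp_def, List.map_const', List.sum_replicate, smul_eq_mul, mul_comm]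

end PTree
namespace PTree

lemma isoFuns_length_zero : ∀ (S T : PTree), normalize S ≠ normalize T →
    (isoFuns S T).length = 0 := by
  intro S
  induction S with
  | leaf => intro T h; cases T with
    | leaf => exact absurd rfl h
    | node l r => rfl
  | node l r ihl ihr =>
    intro T h
    cases T with
    | leaf => rfl
    | node l' r' =>
      rw [isoFuns_node_length]
      rw [ne_eq, normalize_node_eq_iff] at h
      push_neg at h
      obtain ⟨h1, h2⟩ := h
      rcases Decidable.em (normalize l = normalize l') with hc | hc
      · have z1 := ihr r' (fun hh => h1 hc hh)
        rcases Decidable.em (normalize l = normalize r') with hd | hd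
        · have z2 := ihr l' (fun hh => h2 hd hh)
          simp [z1, z2]
        · have z2 := ihl r' hd
          simp [z1, z2]
      · have z1 := ihl l' hc
        rcases Decidable.em (normalize l = normalize r') with hd | hd
        · have z2 := ihr l' (fun hh => h2 hd hh)
          simp [z1, z2]
        · have z2 := ihl r' hd
          simp [z1, z2]

lemma isoFuns_length_eq : ∀ (S T : PTree), normalize S = normalize T →
    (isoFuns S T).length = (isoFuns S S).length := by
  intro S
  induction S with
  | leaf => intro T h; cases T with
    | leaf => rfl
    | node l r => exact absurd h (normalize_leaf_ne_node l r)
  | node l r ihl ihr =>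
    intro T h
    cases T with
    | leaf => exact absurd h.symm (normalize_leaf_ne_node l r)
    | node l' r' =>
      rw [isoFuns_node_length, isoFuns_node_length]
      rw [normalize_node_eq_iff] at h
      rcases Decidable.em (normalize l = normalize r) with hc | hc
      · have e1 : normalize l = normalize l' :=
          h.elim (fun x => x.1) (fun x => hc.trans x.2)
        have e2 : normalize l = normalize r' :=
          h.elim (fun x => hc.trans x.2) (fun x => x.1)
        have e3 : normalize r = normalize l' := hc.symm.trans e1
        have e4 : normalize r = normalize r' := hc.symm.trans e2
        rw [ihl l' e1, ihl r' e2, ihr l' e3, ihr r' e4, ihl r hc, ihr l hc.symm]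
      · rcases h with ⟨h1, h2⟩ | ⟨h1, h2⟩
        · rw [ihl l' h1, ihr r' h2,
            isoFuns_length_zero l r' (fun hh => hc (hh.trans h2.symm)),
            isoFuns_length_zero r l' (fun hh => hc (h1.trans hh.symm)),
            isoFuns_length_zero l r hc,
            isoFuns_length_zero r l (fun hh => hc hh.symm)]
        · rw [ihl r' h1, ihr l' h2,
            isoFuns_length_zero l l' (fun hh => hc (hh.trans h2.symm)),
            isoFuns_length_zero r r' (fun hh => hc (h1.trans hh.symm)),
            isoFuns_length_zero l r hc,
            isoFuns_length_zero r l (fun hh => hc hh.symm)]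
          ring

lemma isoFuns_self_length_pos (S : PTree) : 0 < (isoFuns S S).length := by
  induction S with
  | leaf => simp [isoFuns]
  | node l r ihl ihr =>
    rw [isoFuns_node_length]
    have : 0 < (isoFuns l l).length * (isoFuns r r).length := Nat.mul_pos ihl ihr
    omega

end PTree
namespace PTree

lemma filter_iso_node (b c : PTree) :
    (planeTrees (node b c).size).filter (fun T => normalize T = normalize (node b c)) =
      (((planeTrees b.size).filter (fun T => normalize T = normalize b)) ×ˢ
       ((planeTrees c.size).filter (fun T => normalize T = normalize c))).image
         (fun p => node p.1 p.2) ∪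
      (((planeTrees c.size).filter (fun T => normalize T = normalize c)) ×ˢ
       ((planeTrees b.size).filter (fun T => normalize T = normalize b))).image
         (fun p => node p.1 p.2) := by
  ext T
  simp only [Finset.mem_filter, Finset.mem_union, Finset.mem_image, Finset.mem_product,
    mem_planeTrees]
  constructor
  · rintro ⟨hsz, hn⟩
    cases T with
    | leaf => exact absurd hn (normalize_leaf_ne_node b c)
    | node l r =>
      rw [normalize_node_eq_iff] at hn
      rcases hn with ⟨h1, h2⟩ | ⟨h1, h2⟩
      · exact Or.inl ⟨(l, r), ⟨⟨size_eq_of_normalize_eq h1, h1⟩,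
          ⟨size_eq_of_normalize_eq h2, h2⟩⟩, rfl⟩
      · exact Or.inr ⟨(l, r), ⟨⟨size_eq_of_normalize_eq h1, h1⟩,
          ⟨size_eq_of_normalize_eq h2, h2⟩⟩, rfl⟩
  · rintro (⟨p, ⟨⟨hs1, hn1⟩, ⟨hs2, hn2⟩⟩, rfl⟩ | ⟨p, ⟨⟨hs1, hn1⟩, ⟨hs2, hn2⟩⟩, rfl⟩)
    · exact ⟨by simp [size, hs1, hs2], normalize_node_eq_iff.mpr (Or.inl ⟨hn1, hn2⟩)⟩
    · exact ⟨by simp [size, hs1, hs2]; omega, normalize_node_eq_iff.mpr (Or.inr ⟨hn1, hn2⟩)⟩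

lemma node_injOn (s : Finset (PTree × PTree)) :
    Set.InjOn (fun p : PTree × PTree => node p.1 p.2) s := by
  intro p _ q _ h
  simp only [PTree.node.injEq] at h
  exact Prod.ext h.1 h.2

lemma count_iso : ∀ B : PTree,
    (((planeTrees B.size).filter fun T => normalize T = normalize B).card)
      * (isoFuns B B).length = 2 ^ (B.size - 1) := by
  intro B
  induction B with
  | leaf =>
    simp [planeTrees, size, isoFuns]
    rw [Finset.filter_true_of_mem (by intro x hx; simp at hx; simp [hx])]
    simp
  | node b c ihb ihc =>
    have hb1 := size_pos b
    have hc1 := size_pos c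
    rw [filter_iso_node, isoFuns_node_length]
    by_cases hbc : normalize b = normalize c
    · have hsz : b.size = c.size := size_eq_of_normalize_eq hbc
      have hFF : ((planeTrees c.size).filter (fun T => normalize T = normalize c)) =
          ((planeTrees b.size).filter (fun T => normalize T = normalize b)) := by
        rw [hsz, hbc]
      rw [hFF, Finset.union_self (α := PTree)]
      rw [Finset.card_image_of_injOn (node_injOn _), Finset.card_product]
      rw [isoFuns_length_eq b c hbc, isoFuns_length_eq c b hbc.symm]
      have key : (((planeTrees b.size).filter fun T => normalize T = normalize b).card *
          ((planeTrees b.size).filter fun T => normalize T = normalize b).card) *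
          ((isoFuns b b).length * (isoFuns c c).length +
            (isoFuns b b).length * (isoFuns c c).length)
          = 2 * (2 ^ (b.size - 1)) * (2 ^ (c.size - 1)) := by
        have ihc' : ((planeTrees b.size).filter fun T => normalize T = normalize b).card
            * (isoFuns c c).length = 2 ^ (c.size - 1) := by
          rw [← ihc, hFF]
        calc (((planeTrees b.size).filter fun T => normalize T = normalize b).card *
              ((planeTrees b.size).filter fun T => normalize T = normalize b).card) *
              ((isoFuns b b).length * (isoFuns c c).length +
                (isoFuns b b).length * (isoFuns c c).length)
            = 2 * ((((planeTrees b.size).filter fun T => normalize T = normalize b).card *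
                (isoFuns b b).length) *
              ((((planeTrees b.size).filter fun T => normalize T = normalize b).card) *
                (isoFuns c c).length)) := by ring
          _ = 2 * (2 ^ (b.size - 1) * 2 ^ (c.size - 1)) := by rw [ihb, ihc']
          _ = 2 * 2 ^ (b.size - 1) * 2 ^ (c.size - 1) := by ring
      rw [key]
      rw [show 2 * 2 ^ (b.size - 1) * 2 ^ (c.size - 1) = 2 ^ ((b.size - 1) + (c.size - 1) + 1) by
        rw [pow_add, pow_add]; ring]
      congr 1
      simp [size]; omega
    · have hdisj : Disjoint
          ((((planeTrees b.size).filter (fun T => normalize T = normalize b)) ×ˢ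
            ((planeTrees c.size).filter (fun T => normalize T = normalize c))).image
              (fun p => node p.1 p.2))
          ((((planeTrees c.size).filter (fun T => normalize T = normalize c)) ×ˢ
            ((planeTrees b.size).filter (fun T => normalize T = normalize b))).image
              (fun p => node p.1 p.2)) := by
        simp only [Finset.disjoint_left, Finset.mem_image, Finset.mem_product, Finset.mem_filter]
        rintro T ⟨p, ⟨⟨_, hn1⟩, _⟩, rfl⟩ ⟨q, ⟨⟨_, hn2⟩, _⟩, hq⟩
        simp only [PTree.node.injEq] at hq
        rw [hq.1] at hn2
        exact hbc (hn1.symm.trans hn2)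
      rw [Finset.card_union_of_disjoint hdisj,
        Finset.card_image_of_injOn (node_injOn _), Finset.card_image_of_injOn (node_injOn _),
        Finset.card_product, Finset.card_product]
      rw [isoFuns_length_zero b c hbc, isoFuns_length_zero c b (fun hh => hbc hh.symm)]
      have key : (((planeTrees b.size).filter fun T => normalize T = normalize b).card *
            ((planeTrees c.size).filter fun T => normalize T = normalize c).card +
          ((planeTrees c.size).filter fun T => normalize T = normalize c).card *
            ((planeTrees b.size).filter fun T => normalize T = normalize b).card) *
          ((isoFuns b b).length * (isoFuns c c).length + 0 * 0)
          = 2 * (2 ^ (b.size - 1)) * (2 ^ (c.size - 1)) := by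
        rw [← ihb, ← ihc]; ring
      rw [key]
      rw [show 2 * 2 ^ (b.size - 1) * 2 ^ (c.size - 1) = 2 ^ ((b.size - 1) + (c.size - 1) + 1) by
        rw [pow_add, pow_add]; ring]
      congr 1
      simp [size]; omega

end PTree
namespace PTree

lemma count_hasBranch (B : PTree) {n : ℕ} (h : 2 * B.size < n) :
    ((planeTrees n).filter (fun T => hasBranch B T)).card
      = 2 * (((planeTrees B.size).filter fun T => normalize T = normalize B).card)
          * catalan (n - B.size - 1) := by
  have hm := size_pos B
  have hset : (planeTrees n).filter (fun T => hasBranch B T) =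
      (((planeTrees B.size).filter (fun T => normalize T = normalize B)) ×ˢ
        planeTrees (n - B.size)).image (fun p => node p.1 p.2) ∪
      ((planeTrees (n - B.size)) ×ˢ
        ((planeTrees B.size).filter (fun T => normalize T = normalize B))).image
          (fun p => node p.1 p.2) := by
    ext T
    simp only [Finset.mem_filter, Finset.mem_union, Finset.mem_image, Finset.mem_product,
      mem_planeTrees]
    constructor
    · rintro ⟨hsz, hbr⟩
      cases T with
      | leaf => exact absurd hbr (by simp [hasBranch])
      | node l r =>
        simp only [hasBranch] at hbr
        simp only [size] at hsz
        rcases hbr with h1 | h1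
        · have hl : l.size = B.size := size_eq_of_normalize_eq h1
          exact Or.inl ⟨(l, r), ⟨⟨hl, h1⟩, show r.size = n - B.size by omega⟩, rfl⟩
        · have hr : r.size = B.size := size_eq_of_normalize_eq h1
          exact Or.inr ⟨(l, r), ⟨show l.size = n - B.size by omega, ⟨hr, h1⟩⟩, rfl⟩
    · rintro (⟨p, ⟨⟨⟨hs1, hn1⟩, hs2⟩, rfl⟩⟩ | ⟨p, ⟨⟨hs1, ⟨hs2, hn2⟩⟩, rfl⟩⟩)
      · exact ⟨by simp only [size]; omega, by simp [hasBranch, hn1]⟩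
      · exact ⟨by simp only [size]; omega, by simp [hasBranch, hn2]⟩
  rw [hset]
  have hdisj : Disjoint
      ((((planeTrees B.size).filter (fun T => normalize T = normalize B)) ×ˢ
        planeTrees (n - B.size)).image (fun p => node p.1 p.2))
      (((planeTrees (n - B.size)) ×ˢ
        ((planeTrees B.size).filter (fun T => normalize T = normalize B))).image
          (fun p => node p.1 p.2)) := by
    simp only [Finset.disjoint_left, Finset.mem_image, Finset.mem_product, Finset.mem_filter]
    rintro T ⟨p, ⟨⟨hp1, _⟩, _⟩, rfl⟩ ⟨q, ⟨hq1, _⟩, hq⟩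
    simp only [PTree.node.injEq] at hq
    have e1 := mem_planeTrees.mp hp1
    have e2 := mem_planeTrees.mp hq1
    rw [hq.1] at e2
    omega
  rw [Finset.card_union_of_disjoint hdisj,
    Finset.card_image_of_injOn (node_injOn _), Finset.card_image_of_injOn (node_injOn _),
    Finset.card_product, Finset.card_product]
  have hG : ∀ k : ℕ, 0 < k → (planeTrees k).card = catalan (k - 1) := by
    intro k hk
    cases k with
    | zero => omega
    | succ j => rw [card_planeTrees]; rfl
  rw [hG (n - B.size) (by omega)]
  ring

end PTree
namespace PTree

lemma catalan_ratio_eq (k : ℕ) :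
    (catalan k : ℝ) / catalan (k + 1) = ((k : ℝ) + 2) / (2 * (2 * k + 1)) := by
  have h1 : ((k : ℝ) + 1) * catalan k = Nat.centralBinom k := by
    exact_mod_cast congrArg (Nat.cast : ℕ → ℝ) (succ_mul_catalan_eq_centralBinom k)
  have h2 : ((k : ℝ) + 1 + 1) * catalan (k + 1) = Nat.centralBinom (k + 1) := by
    have := congrArg (Nat.cast : ℕ → ℝ) (succ_mul_catalan_eq_centralBinom (k + 1))
    push_cast at this ⊢
    linarith [this]
  have h3 : ((k : ℝ) + 1) * Nat.centralBinom (k + 1)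
      = 2 * (2 * k + 1) * Nat.centralBinom k := by
    have := congrArg (Nat.cast : ℕ → ℝ) (Nat.succ_mul_centralBinom_succ k)
    push_cast at this ⊢
    linarith [this]
  have hc1 : (catalan (k + 1) : ℝ) ≠ 0 := Nat.cast_ne_zero.mpr (catalan_ne_zero (k + 1))
  have hd : (2 * (2 * (k : ℝ) + 1)) ≠ 0 := by positivity
  rw [div_eq_div_iff hc1 hd]
  have hk1 : ((k : ℝ) + 1) ≠ 0 := by positivity
  apply mul_left_cancel₀ hk1
  linear_combination (2 * (2 * (k : ℝ) + 1)) * h1 - ((k : ℝ) + 1) * h2 - h3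

lemma catalan_ratio_tendsto :
    Filter.Tendsto (fun k : ℕ => (catalan k : ℝ) / catalan (k + 1))
      Filter.atTop (nhds (1 / 4)) := by
  have hinv : Filter.Tendsto (fun k : ℕ => ((k : ℝ))⁻¹) Filter.atTop (nhds 0) :=
    tendsto_inv_atTop_nhds_zero_nat
  have t1 : Filter.Tendsto (fun k : ℕ => 1 + 2 * ((k : ℝ))⁻¹) Filter.atTop (nhds 1) := by
    have := (hinv.const_mul 2).const_add 1
    simpa using this
  have t2 : Filter.Tendsto (fun k : ℕ => 4 + 2 * ((k : ℝ))⁻¹) Filter.atTop (nhds 4) := by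
    have := (hinv.const_mul 2).const_add 4
    simpa using this
  have := t1.div t2 (by norm_num)
  apply this.congr'
  filter_upwards [Filter.eventually_ge_atTop 1] with k hk
  have hk0 : (k : ℝ) ≠ 0 := by
    simp only [ne_eq, Nat.cast_eq_zero]; omega
  simp only [Pi.div_apply]
  rw [catalan_ratio_eq]
  have hkpos : (0:ℝ) < (k:ℝ) := by exact_mod_cast Nat.pos_of_ne_zero (by omega)
  rw [div_eq_div_iff (by positivity) (by positivity)]
  field_simp
  ring_nf

lemma catalan_ratio_pow (m : ℕ) :
    Filter.Tendsto (fun n : ℕ => (catalan (n - m - 1) : ℝ) / catalan (n - 1))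
      Filter.atTop (nhds ((1 / 4 : ℝ) ^ m)) := by
  induction m with
  | zero =>
    simp only [Nat.sub_zero, pow_zero]
    refine Filter.Tendsto.congr (fun n => ?_) tendsto_const_nhds
    exact (div_self (Nat.cast_ne_zero.mpr (catalan_ne_zero (n - 1)))).symm
  | succ m ih =>
    have comp : Filter.Tendsto
        (fun n : ℕ => (catalan (n - (m + 2)) : ℝ) / catalan ((n - (m + 2)) + 1))
        Filter.atTop (nhds (1 / 4)) :=
      catalan_ratio_tendsto.comp (Filter.tendsto_sub_atTop_nat (m + 2))
    have prod := comp.mul ih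
    rw [show (1 / 4 : ℝ) * (1 / 4 : ℝ) ^ m = (1 / 4 : ℝ) ^ (m + 1) by ring] at prod
    apply prod.congr'
    filter_upwards [Filter.eventually_ge_atTop (m + 2)] with n hn
    have e1 : n - (m + 2) = n - m - 2 := by omega
    have e2 : n - m - 2 + 1 = n - m - 1 := by omega
    have e3 : n - (m + 1) - 1 = n - m - 2 := by omega
    rw [e1, e2, e3]
    have hb : (catalan (n - m - 1) : ℝ) ≠ 0 := Nat.cast_ne_zero.mpr (catalan_ne_zero _)
    rw [div_mul_div_comm, mul_comm ((catalan (n - m - 2) : ℝ)) _,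
      mul_div_mul_left _ _ hb]

end PTree
namespace PTree

lemma card_planeTrees' {k : ℕ} (hk : 0 < k) : (planeTrees k).card = catalan (k - 1) := by
  cases k with
  | zero => omega
  | succ j => rw [card_planeTrees]; rfl

end PTree

open PTree in
/-- For `n > 2|B|` the number of plane binary trees with `n` leaves having a root
branch isomorphic to `B` equals `2 · (2^(|B|-1)/|A(B)|) · C_(n-|B|)` (with
`C_k = catalan (k-1)` the number of plane binary trees with `k` leaves); consequently
the proportion of such trees tends to `2^(-|B|)/|A(B)|`. -/
theorem count_root_branch (B : PTree) :
    (∀ n : ℕ, 2 * B.size < n →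
      (((planeTrees n).filter (fun T => hasBranch B T)).card : ℝ)
        = 2 * ((2 : ℝ) ^ (B.size - 1) / ((isoFuns B B).length : ℝ))
            * (catalan (n - B.size - 1) : ℝ)) ∧
    Filter.Tendsto
      (fun n : ℕ => (((planeTrees n).filter (fun T => hasBranch B T)).card : ℝ)
        / ((planeTrees n).card : ℝ))
      Filter.atTop (nhds (1 / (2 ^ B.size * ((isoFuns B B).length : ℝ)))) := by
  have hm := size_pos B
  have hlen0 : 0 < (isoFuns B B).length := isoFuns_self_length_pos B
  have hlenR : ((isoFuns B B).length : ℝ) ≠ 0 := Nat.cast_ne_zero.mpr (by omega)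
  have hNl : ((((planeTrees B.size).filter fun T => normalize T = normalize B).card : ℝ))
      * ((isoFuns B B).length : ℝ) = 2 ^ (B.size - 1) := by
    have := congrArg (Nat.cast : ℕ → ℝ) (count_iso B)
    push_cast at this
    exact this
  have hN : ((((planeTrees B.size).filter fun T => normalize T = normalize B).card : ℝ))
      = 2 ^ (B.size - 1) / ((isoFuns B B).length : ℝ) := by
    rw [eq_div_iff hlenR]; exact hNl
  have part1 : ∀ n : ℕ, 2 * B.size < n →
      (((planeTrees n).filter (fun T => hasBranch B T)).card : ℝ)
        = 2 * ((2 : ℝ) ^ (B.size - 1) / ((isoFuns B B).length : ℝ))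
            * (catalan (n - B.size - 1) : ℝ) := by
    intro n hn
    rw [count_hasBranch B hn]
    push_cast
    rw [← hN]
  refine ⟨part1, ?_⟩
  have h2 : (2 : ℝ) ^ B.size = 2 * 2 ^ (B.size - 1) := by
    conv_lhs => rw [show B.size = (B.size - 1) + 1 by omega]
    rw [pow_succ]; ring
  have hval : 2 * ((2 : ℝ) ^ (B.size - 1) / ((isoFuns B B).length : ℝ)) * (1 / 4 : ℝ) ^ B.size
      = 1 / (2 ^ B.size * ((isoFuns B B).length : ℝ)) := by
    calc 2 * ((2 : ℝ) ^ (B.size - 1) / ((isoFuns B B).length : ℝ)) * (1 / 4 : ℝ) ^ B.size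
        = (2 * 2 ^ (B.size - 1)) * (1 / 4 : ℝ) ^ B.size / ((isoFuns B B).length : ℝ) := by
          ring
      _ = 2 ^ B.size * (1 / 4 : ℝ) ^ B.size / ((isoFuns B B).length : ℝ) := by rw [← h2]
      _ = (2 * (1 / 4) : ℝ) ^ B.size / ((isoFuns B B).length : ℝ) := by rw [mul_pow]
      _ = (1 / 2 : ℝ) ^ B.size / ((isoFuns B B).length : ℝ) := by norm_num
      _ = 1 / (2 ^ B.size * ((isoFuns B B).length : ℝ)) := by
          rw [div_pow, one_pow, div_div]
  have tend : Filter.Tendsto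
      (fun n : ℕ => 2 * ((2 : ℝ) ^ (B.size - 1) / ((isoFuns B B).length : ℝ)) *
        ((catalan (n - B.size - 1) : ℝ) / (catalan (n - 1) : ℝ)))
      Filter.atTop
      (nhds (2 * ((2 : ℝ) ^ (B.size - 1) / ((isoFuns B B).length : ℝ)) * (1 / 4 : ℝ) ^ B.size)) :=
    (catalan_ratio_pow B.size).const_mul _
  rw [hval] at tend
  apply Filter.Tendsto.congr' _ tend
  filter_upwards [Filter.eventually_gt_atTop (2 * B.size)] with n hn
  rw [part1 n hn, card_planeTrees' (show 0 < n by omega)]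
  ring
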